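/- For every real number a with −1 < a < −1/2 and all real u, v, one has ∫_ℝ (u−y)₊^a (v−y)₊^a dy = B(−1−2a, a+1) · |u−v|^{2a+1}, where B denotes the Beta function and x₊^a = x^a if x > 0 and 0 otherwise. -/

import Mathlib

open MeasureTheory Set

/-- `x₊^a`: equals `x^a` when `x > 0` and `0` otherwise. -/
noncomputable def plusPow (x a : ℝ) : ℝ := if 0 < x then x ^ a else 0

lemma plusPow_of_pos {x : ℝ} (hx : 0 < x) (a : ℝ) : plusPow x a = x ^ a := if_pos hx

lemma plusPow_of_nonpos {x : ℝ} (hx : x ≤ 0) (a : ℝ) : plusPow x a = 0 :=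
  if_neg (not_lt.2 hx)

/-- The substitution map `s ↦ v - c·s/(1-s)` sends `(0,1)` onto `(-∞, v)`. -/
lemma image_subst {c : ℝ} (hc : 0 < c) (v : ℝ) :
    (fun s : ℝ => v - c * s / (1 - s)) '' Ioo 0 1 = Iio v := by
  ext y
  constructor
  · rintro ⟨s, ⟨hs0, hs1⟩, rfl⟩
    have h1 : 0 < 1 - s := by linarith
    have : 0 < c * s / (1 - s) := by positivity
    simp only [mem_Iio]; linarith
  · intro hy
    have hy' : 0 < v - y := by simpa using hy
    have hd : 0 < v - y + c := by linarith
    refine ⟨(v - y) / (v - y + c), ⟨by positivity, ?_⟩, ?_⟩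
    · rw [div_lt_one hd]; linarith
    · field_simp
      rw [show v - y + c - (v - y) = c by ring,
        show c * (v - y) / c = v - y by have := hc.ne'; field_simp]
      ring

lemma injOn_subst {c : ℝ} (hc : 0 < c) (v : ℝ) :
    InjOn (fun s : ℝ => v - c * s / (1 - s)) (Ioo 0 1) := by
  intro s₁ h₁ s₂ h₂ heq
  have e₁ : (0:ℝ) < 1 - s₁ := by linarith [h₁.2]
  have e₂ : (0:ℝ) < 1 - s₂ := by linarith [h₂.2]
  have heq' : v - c * s₁ / (1 - s₁) = v - c * s₂ / (1 - s₂) := heq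
  have h : c * s₁ / (1 - s₁) = c * s₂ / (1 - s₂) := by linarith
  field_simp at h
  have h' : c * (s₁ - s₂) = 0 := by nlinarith [h]
  have := mul_eq_zero.1 h'
  rcases this with h0 | h0
  · exact absurd h0 hc.ne'
  · linarith

lemma hasDeriv_subst {c : ℝ} (v : ℝ) {s : ℝ} (hs : s ∈ Ioo (0:ℝ) 1) :
    HasDerivAt (fun x : ℝ => v - c * x / (1 - x)) (-(c / (1 - s) ^ 2)) s := by
  have hne : (1 : ℝ) - s ≠ 0 := by have := hs.2; intro h; simp only [mem_Ioo] at hs; linarith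
  have h1 : HasDerivAt (fun x : ℝ => c * x) c s := by
    simpa using (hasDerivAt_id s).const_mul c
  have h2 : HasDerivAt (fun x : ℝ => 1 - x) (-1) s := by
    simpa using (hasDerivAt_id s).const_sub 1
  have h3 := h1.div h2 hne
  have h4 := (hasDerivAt_const s v).sub h3
  refine (show HasDerivAt (fun x : ℝ => v - c * x / (1 - x)) _ s from h4).congr_deriv ?_
  ring

lemma not_integrable_diag {a u : ℝ} (_ha₁ : -1 < a) (ha₂ : a < -(1/2)) :
    ¬ Integrable (fun y : ℝ => plusPow (u - y) a * plusPow (u - y) a) := by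
  intro h
  have himg : (fun t : ℝ => u - t) '' Ioo 0 1 = Ioo (u - 1) u := by
    ext y
    constructor
    · rintro ⟨t, ht, rfl⟩
      simp only [mem_Ioo] at ht ⊢
      constructor <;> linarith [ht.1, ht.2]
    · intro hy
      simp only [mem_Ioo] at hy
      refine ⟨u - y, ?_, by ring⟩
      simp only [mem_Ioo]
      constructor <;> linarith [hy.1, hy.2]
  have hIoo : IntegrableOn (fun y : ℝ => plusPow (u - y) a * plusPow (u - y) a)
      (Ioo (u - 1) u) := h.integrableOn
  rw [← himg] at hIoo
  have hderiv : ∀ t ∈ Ioo (0:ℝ) 1,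
      HasDerivWithinAt (fun t : ℝ => u - t) (-1 : ℝ) (Ioo 0 1) t := fun t _ =>
    ((hasDerivAt_id t).const_sub u).hasDerivWithinAt
  have hinj : InjOn (fun t : ℝ => u - t) (Ioo 0 1) := fun t₁ _ t₂ _ h => by
    have h' : u - t₁ = u - t₂ := h
    linarith
  rw [integrableOn_image_iff_integrableOn_abs_deriv_smul measurableSet_Ioo hderiv hinj] at hIoo
  have hcongr : IntegrableOn (fun t : ℝ => t ^ (a + a)) (Ioo (0:ℝ) 1) := by
    refine hIoo.congr_fun (fun t ht => ?_) measurableSet_Ioo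
    have ht0 : 0 < t := ht.1
    have : u - (u - t) = t := by ring
    simp only [smul_eq_mul, abs_neg, abs_one, one_mul, this]
    rw [plusPow_of_pos ht0, ← Real.rpow_add ht0]
  rw [intervalIntegral.integrableOn_Ioo_rpow_iff zero_lt_one] at hcongr
  linarith

/-- For `-1 < a < -1/2` and all real `u, v`,
`∫_ℝ (u−y)₊^a (v−y)₊^a dy = B(−1−2a, a+1) · |u−v|^{2a+1}`,
where `B(p,q) = ∫₀¹ t^{p−1}(1−t)^{q−1} dt` is the Euler Beta function. -/
theorem integral_plusPow_mul_plusPow (a : ℝ) (ha₁ : -1 < a) (ha₂ : a < -(1/2))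
    (u v : ℝ) :
    ∫ y : ℝ, plusPow (u - y) a * plusPow (v - y) a =
      (∫ t in (0:ℝ)..1, t ^ (-1 - 2*a - 1) * (1 - t) ^ (a + 1 - 1)) *
        |u - v| ^ (2*a + 1) := by
  wlog hvu : v ≤ u with H
  · have := H a ha₁ ha₂ v u (le_of_not_ge hvu)
    simp_rw [mul_comm (plusPow (v - _) a) (plusPow (u - _) a)] at this
    rwa [abs_sub_comm v u] at this
  rcases eq_or_lt_of_le hvu with heq | hlt
  · -- u = v : both sides are zero
    subst heq
    rw [integral_undef (not_integrable_diag ha₁ ha₂)]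
    rw [sub_self, abs_zero, Real.zero_rpow (by linarith), mul_zero]
  · -- v < u
    set c := u - v with hc_def
    have hc : 0 < c := by simp [hc_def]; linarith
    -- Step 1: restrict the integral to Iio v
    have hind : (fun y : ℝ => plusPow (u - y) a * plusPow (v - y) a) =
        Set.indicator (Iio v) (fun y => (u - y) ^ a * (v - y) ^ a) := by
      funext y
      by_cases hy : y < v
      · rw [Set.indicator_of_mem (by simpa using hy),
          plusPow_of_pos (by linarith) a, plusPow_of_pos (by linarith) a]
      · have hvy : v - y ≤ 0 := by simp only [not_lt] at hy; linarith
        rw [Set.indicator_of_notMem (by simpa using hy),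
          plusPow_of_nonpos hvy a, mul_zero]
    rw [hind, integral_indicator measurableSet_Iio]
    -- Step 2 : change of variables y = v - c s / (1-s)
    rw [← image_subst hc v,
      integral_image_eq_integral_abs_deriv_smul measurableSet_Ioo
        (fun s hs => (hasDeriv_subst v hs).hasDerivWithinAt) (injOn_subst hc v)]
    -- Step 3 : simplify the integrand
    have hpt : ∀ s ∈ Ioo (0:ℝ) 1,
        |(-(c / (1 - s) ^ 2))| •
          ((u - (v - c * s / (1 - s))) ^ a * (v - (v - c * s / (1 - s))) ^ a) =
        c ^ (2*a + 1) * ((1 - s) ^ (-1 - 2*a - 1) * s ^ (a + 1 - 1)) := by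
      intro s hs
      obtain ⟨hs0, hs1⟩ := hs
      have hp : (0:ℝ) < 1 - s := by linarith
      have h1 : u - (v - c * s / (1 - s)) = c / (1 - s) := by
        field_simp [hc_def]
        ring
      have h2 : v - (v - c * s / (1 - s)) = c * s / (1 - s) := by ring
      have habs : |(-(c / (1 - s) ^ 2))| = c / (1 - s) ^ 2 := by
        rw [abs_neg, abs_of_pos (by positivity)]
      rw [h1, h2, habs, smul_eq_mul]
      have e1 : (c / (1 - s)) ^ a = c ^ a / (1 - s) ^ a :=
        Real.div_rpow hc.le hp.le a
      have e2 : (c * s / (1 - s)) ^ a = c ^ a * s ^ a / (1 - s) ^ a := by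
        rw [Real.div_rpow (by positivity) hp.le, Real.mul_rpow hc.le hs0.le]
      have e3 : c ^ (2*a + 1) = c ^ a * c ^ a * c := by
        rw [show 2*a + 1 = a + a + 1 by ring, Real.rpow_add hc, Real.rpow_add hc,
          Real.rpow_one]
      have e4 : (1 - s) ^ (-1 - 2*a - 1) =
          ((1 - s) ^ a)⁻¹ * ((1 - s) ^ a)⁻¹ * (((1 - s) ^ (2:ℕ)))⁻¹ := by
        rw [show -1 - 2*a - 1 = (-a) + (-a) + (-(2:ℕ):ℝ) by push_cast; ring,
          Real.rpow_add hp, Real.rpow_add hp, Real.rpow_neg hp.le,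
          Real.rpow_neg hp.le, Real.rpow_natCast]
      have e5 : s ^ (a + 1 - 1) = s ^ a := by norm_num
      rw [e1, e2, e3, e4, e5]
      have n1 : (1 - s) ^ a ≠ 0 := (Real.rpow_pos_of_pos hp a).ne'
      have n2 : ((1 - s):ℝ) ^ (2:ℕ) ≠ 0 := by positivity
      field_simp
    rw [setIntegral_congr_fun measurableSet_Ioo hpt, integral_const_mul]
    -- Step 4 : identify with the Beta integral
    have hbeta : (∫ t in (0:ℝ)..1, t ^ (-1 - 2*a - 1) * (1 - t) ^ (a + 1 - 1)) =
        ∫ s in Ioo (0:ℝ) 1, (1 - s) ^ (-1 - 2*a - 1) * s ^ (a + 1 - 1) := by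
      have := intervalIntegral.integral_comp_sub_left
        (fun t : ℝ => t ^ (-1 - 2*a - 1) * (1 - t) ^ (a + 1 - 1)) 1 (a := 0) (b := 1)
      simp only [sub_sub_cancel, sub_zero, sub_self] at this
      rw [← this, intervalIntegral.integral_of_le zero_le_one,
        integral_Ioc_eq_integral_Ioo]
    rw [hbeta, abs_of_pos hc, mul_comm]
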